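/- Let C be a monoidal category. Suppose h₁, h₂ : A₁ ⇉ A₂ is a reflexive pair with coequalizer h : A₂ → A₃ and k₁, k₂ : B₁ ⇉ B₂ is a reflexive pair with coequalizer k : B₂ → B₃, and suppose both coequalizers are preserved by tensoring with any object on either side. Then h₁ ⊗ k₁, h₂ ⊗ k₂ : A₁ ⊗ B₁ ⇉ A₂ ⊗ B₂ is a reflexive pair and h ⊗ k : A₂ ⊗ B₂ → A₃ ⊗ B₃ is its coequalizer. -/

import Mathlib

open CategoryTheory CategoryTheory.Limits CategoryTheory.MonoidalCategory

universe v u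

/-- (Part of the 3-by-3 lemma.) Given two reflexive coequalizers in a monoidal category,
both preserved by tensoring with any object on either side, their tensor product is again
a reflexive coequalizer. -/
theorem tensor_of_reflexive_coequalizers
    {C : Type u} [Category.{v} C] [MonoidalCategory C]
    {A₁ A₂ A₃ B₁ B₂ B₃ : C}
    (h₁ h₂ : A₁ ⟶ A₂) (hrefl : IsReflexivePair h₁ h₂)
    (k₁ k₂ : B₁ ⟶ B₂) (krefl : IsReflexivePair k₁ k₂)
    (h : A₂ ⟶ A₃) (wh : h₁ ≫ h = h₂ ≫ h) (hcoeq : IsColimit (Cofork.ofπ h wh))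
    (k : B₂ ⟶ B₃) (wk : k₁ ≫ k = k₂ ≫ k) (kcoeq : IsColimit (Cofork.ofπ k wk))
    (hpres : ∀ X : C, PreservesColimit (parallelPair h₁ h₂) (tensorLeft X) ∧
      PreservesColimit (parallelPair h₁ h₂) (tensorRight X))
    (kpres : ∀ X : C, PreservesColimit (parallelPair k₁ k₂) (tensorLeft X) ∧
      PreservesColimit (parallelPair k₁ k₂) (tensorRight X)) :
    IsReflexivePair (h₁ ⊗ₘ k₁) (h₂ ⊗ₘ k₂) ∧
    Nonempty (IsColimit (Cofork.ofπ (h ⊗ₘ k)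
      (show (h₁ ⊗ₘ k₁) ≫ (h ⊗ₘ k) = (h₂ ⊗ₘ k₂) ≫ (h ⊗ₘ k) by
        rw [tensorHom_comp_tensorHom, tensorHom_comp_tensorHom, wh, wk]))) := by
  obtain ⟨sA, hsA₁, hsA₂⟩ := hrefl.common_section
  obtain ⟨sB, hsB₁, hsB₂⟩ := krefl.common_section
  constructor
  · exact IsReflexivePair.mk' (sA ⊗ₘ sB)
      (by rw [tensorHom_comp_tensorHom, hsA₁, hsB₁, id_tensorHom_id])
      (by rw [tensorHom_comp_tensorHom, hsA₂, hsB₂, id_tensorHom_id])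
  -- preserved coequalizers
  have := (hpres B₂).2
  have hB₂ : IsColimit (Cofork.ofπ ((tensorRight B₂).map h)
      (by simp only [← (tensorRight B₂).map_comp, wh]) :
      Cofork ((tensorRight B₂).map h₁) ((tensorRight B₂).map h₂)) :=
    isColimitCoforkMapOfIsColimit (tensorRight B₂) wh hcoeq
  have := (hpres B₁).2
  have hB₁ : IsColimit (Cofork.ofπ ((tensorRight B₁).map h)
      (by simp only [← (tensorRight B₁).map_comp, wh]) :
      Cofork ((tensorRight B₁).map h₁) ((tensorRight B₁).map h₂)) :=
    isColimitCoforkMapOfIsColimit (tensorRight B₁) wh hcoeq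
  have := (kpres A₃).1
  have kA₃ : IsColimit (Cofork.ofπ ((tensorLeft A₃).map k)
      (by simp only [← (tensorLeft A₃).map_comp, wk]) :
      Cofork ((tensorLeft A₃).map k₁) ((tensorLeft A₃).map k₂)) :=
    isColimitCoforkMapOfIsColimit (tensorLeft A₃) wk kcoeq
  refine ⟨Cofork.IsColimit.mk' _ fun s => ?_⟩
  have hcond : (h₁ ⊗ₘ k₁) ≫ s.π = (h₂ ⊗ₘ k₂) ≫ s.π := s.condition
  -- s.π coequalizes h₁ ▷ B₂ and h₂ ▷ B₂
  have eq1 : (tensorRight B₂).map h₁ ≫ s.π = (tensorRight B₂).map h₂ ≫ s.π := by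
    have e₁ : (tensorRight B₂).map h₁ = (A₁ ◁ sB) ≫ (h₁ ⊗ₘ k₁) := by
      simp [← id_tensorHom, ← tensorHom_id, tensorHom_comp_tensorHom, hsB₁]
    have e₂ : (tensorRight B₂).map h₂ = (A₁ ◁ sB) ≫ (h₂ ⊗ₘ k₂) := by
      simp [← id_tensorHom, ← tensorHom_id, tensorHom_comp_tensorHom, hsB₂]
    rw [e₁, e₂, Category.assoc, Category.assoc, hcond]
  obtain ⟨d₁, hd₁⟩ := Cofork.IsColimit.desc' hB₂ s.π eq1
  -- d₁ coequalizes A₃ ◁ k₁ and A₃ ◁ k₂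
  have exch : ∀ (i : B₁ ⟶ B₂),
      (tensorRight B₁).map h ≫ (tensorLeft A₃).map i
        = (tensorLeft A₂).map i ≫ (tensorRight B₂).map h := by
    intro i
    simp [← id_tensorHom, ← tensorHom_id, tensorHom_comp_tensorHom]
  have sπeq : (tensorLeft A₂).map k₁ ≫ s.π = (tensorLeft A₂).map k₂ ≫ s.π := by
    have e₁ : (tensorLeft A₂).map k₁ = (sA ▷ B₁) ≫ (h₁ ⊗ₘ k₁) := by
      simp [← id_tensorHom, ← tensorHom_id, tensorHom_comp_tensorHom, hsA₁]
    have e₂ : (tensorLeft A₂).map k₂ = (sA ▷ B₁) ≫ (h₂ ⊗ₘ k₂) := by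
      simp [← id_tensorHom, ← tensorHom_id, tensorHom_comp_tensorHom, hsA₂]
    rw [e₁, e₂, Category.assoc, Category.assoc, hcond]
  have eq2 : (tensorLeft A₃).map k₁ ≫ d₁ = (tensorLeft A₃).map k₂ ≫ d₁ := by
    apply Cofork.IsColimit.hom_ext hB₁
    rw [Cofork.π_ofπ]
    rw [← Category.assoc, ← Category.assoc, exch k₁, exch k₂,
      Category.assoc, Category.assoc]
    have hd₁' : (tensorRight B₂).map h ≫ d₁ = s.π := by
      simpa using hd₁
    rw [hd₁', sπeq]
  obtain ⟨d, hd⟩ := Cofork.IsColimit.desc' kA₃ d₁ eq2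
  have hdec : (h ⊗ₘ k) = (tensorRight B₂).map h ≫ (tensorLeft A₃).map k := by
    simp [← id_tensorHom, ← tensorHom_id, tensorHom_comp_tensorHom]
  have hd₁' : (tensorRight B₂).map h ≫ d₁ = s.π := by simpa using hd₁
  have hd' : (tensorLeft A₃).map k ≫ d = d₁ := by simpa using hd
  refine ⟨d, ?_, ?_⟩
  · calc (h ⊗ₘ k) ≫ d = ((tensorRight B₂).map h ≫ (tensorLeft A₃).map k) ≫ d := by
          rw [← hdec]
      _ = s.π := by rw [Category.assoc, hd', hd₁']
  · intro m hm
    rw [Cofork.π_ofπ] at hm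
    apply Cofork.IsColimit.hom_ext kA₃
    apply Cofork.IsColimit.hom_ext hB₂
    calc (tensorRight B₂).map h ≫ Cofork.π (Cofork.ofπ ((tensorLeft A₃).map k) _) ≫ m
        = ((tensorRight B₂).map h ≫ (tensorLeft A₃).map k) ≫ m := by
          rw [Cofork.π_ofπ, Category.assoc]
      _ = (h ⊗ₘ k) ≫ m := by rw [← hdec]
      _ = s.π := hm
      _ = (tensorRight B₂).map h ≫ Cofork.π (Cofork.ofπ ((tensorLeft A₃).map k) _) ≫ d := by
          rw [Cofork.π_ofπ, hd', hd₁']
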